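/- Let d ≥ 3 be an integer and γ ≥ 1 a real number. Assume that (i) for every integer m ≥ 1, p_2(m) ≤ exp(π·√(2m/3)), and (ii) for every integer k ≥ 1, p_{d−1}(k) ≤ γ^{k^{1−1/(d−1)}}. Then for every integer n ≥ 1, p_d(n) ≤ exp(π·√(2n/3)) · d^{d·n^{1/d}} · γ^{d^{1/(d−1)}·n^{1−1/d}}, where all powers are real powers. -/

import Mathlib

open Finset

attribute [local instance 10] Classical.propDecidable

/-- `lowerCount d n` is the number of lower sets `Q ⊆ ℕ^d` with exactly `n` elements. -/
noncomputable def lowerCount (d n : ℕ) : ℕ :=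
  Nat.card {Q : Finset (Fin d → ℕ) // IsLowerSet (↑Q : Set (Fin d → ℕ)) ∧ Q.card = n}

/-- a downward closed finset of ℕ is a range -/
lemma rangelem (S : Finset ℕ) (h : ∀ a b : ℕ, a ≤ b → b ∈ S → a ∈ S) :
    S = range S.card := by
  ext x
  simp only [mem_range]
  constructor
  · intro hx
    have : range (x + 1) ⊆ S := by
      intro a ha; exact h a x (by simpa [Nat.lt_succ_iff] using ha) hx
    have := Finset.card_le_card this
    simpa using this
  · intro hx
    by_contra hxS
    have : S ⊆ range x := by
      intro s hs
      simp only [mem_range]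
      by_contra hsx
      exact hxS (h x s (by omega) hs)
    have := Finset.card_le_card this
    simp at this; omega

/-- the finset of all lower sets of size k in ℕ^e -/
noncomputable def LC (e k : ℕ) : Finset (Finset (Fin e → ℕ)) :=
  ((Fintype.piFinset (fun _ : Fin e => range k)).powerset).filter
    (fun Q => IsLowerSet (↑Q : Set (Fin e → ℕ)) ∧ Q.card = k)

lemma box_subset {e : ℕ} {Q : Finset (Fin e → ℕ)} (hQ : IsLowerSet (↑Q : Set (Fin e → ℕ)))
    {x : Fin e → ℕ} (hx : x ∈ Q) :
    Fintype.piFinset (fun c => range (x c + 1)) ⊆ Q := by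
  intro y hy
  simp only [Fintype.mem_piFinset, mem_range, Nat.lt_succ_iff] at hy
  exact hQ (fun c => hy c) hx

lemma mem_LC {e k : ℕ} {Q : Finset (Fin e → ℕ)} :
    Q ∈ LC e k ↔ IsLowerSet (↑Q : Set (Fin e → ℕ)) ∧ Q.card = k := by
  unfold LC
  simp only [mem_filter, mem_powerset, and_iff_right_iff_imp]
  rintro ⟨hl, hc⟩
  intro x hx
  simp only [Fintype.mem_piFinset, mem_range]
  intro c
  have hsub := box_subset hl hx
  have hcard := Finset.card_le_card hsub
  rw [Fintype.card_piFinset] at hcard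
  have h1 : x c + 1 ≤ ∏ i : Fin e, (range (x i + 1)).card := by
    have := Finset.single_le_prod' (f := fun i => (range (x i + 1)).card)
      (s := univ) (fun i _ => by simp) (mem_univ c)
    simpa using this
  simp only [Finset.card_range] at hcard h1
  omega

lemma lowerCount_eq (e k : ℕ) : lowerCount e k = (LC e k).card := by
  unfold lowerCount
  rw [Nat.card_congr (Equiv.subtypeEquivRight (fun Q => mem_LC.symm))]
  rw [Nat.card_eq_fintype_card, Fintype.card_coe]

lemma LC_zero (e : ℕ) : LC e 0 = {∅} := by
  ext Q
  rw [mem_LC]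
  simp only [Finset.card_eq_zero, mem_singleton]
  constructor
  · rintro ⟨-, h⟩; exact h
  · rintro rfl; exact ⟨by simp [IsLowerSet], rfl⟩

/-- Jensen / power mean: ∑ x^p ≤ card^(1-p) * (∑ x)^p for 0 < p ≤ 1 -/
lemma jensen {ι : Type*} (s : Finset ι) (x : ι → ℝ) (hx : ∀ i ∈ s, 0 ≤ x i)
    {p : ℝ} (hp0 : 0 < p) (hp1 : p ≤ 1) (hs : s.Nonempty) :
    ∑ i ∈ s, x i ^ p ≤ (s.card : ℝ) ^ (1 - p) * (∑ i ∈ s, x i) ^ p := by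
  have hcard : (0:ℝ) < s.card := by exact_mod_cast Finset.card_pos.mpr hs
  have key := Real.arith_mean_le_rpow_mean s (fun _ => (s.card : ℝ)⁻¹)
    (fun i => x i ^ p) (fun i _ => by positivity)
    (by rw [Finset.sum_const, nsmul_eq_mul]; field_simp)
    (fun i hi => Real.rpow_nonneg (hx i hi) p)
    (p := 1 / p) (by rw [le_div_iff₀ hp0]; linarith)
  have hrw : ∀ i ∈ s, (x i ^ p) ^ ((1:ℝ)/p) = x i := by
    intro i hi
    rw [← Real.rpow_mul (hx i hi)]; field_simp; simp
  rw [one_div_one_div] at key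
  rw [Finset.sum_congr rfl (fun i hi => by rw [hrw i hi] :
    ∀ i ∈ s, (s.card:ℝ)⁻¹ * (x i ^ p) ^ ((1:ℝ)/p) = (s.card:ℝ)⁻¹ * x i)] at key
  have hL : ∑ i ∈ s, (s.card:ℝ)⁻¹ * x i ^ p = (s.card:ℝ)⁻¹ * ∑ i ∈ s, x i ^ p := by
    rw [Finset.mul_sum]
  have hR : (∑ i ∈ s, (s.card:ℝ)⁻¹ * x i) = (s.card:ℝ)⁻¹ * ∑ i ∈ s, x i := by
    rw [Finset.mul_sum]
  rw [hL, hR] at key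
  have hsum : 0 ≤ ∑ i ∈ s, x i := Finset.sum_nonneg hx
  rw [Real.mul_rpow (by positivity) hsum] at key
  have := mul_le_mul_of_nonneg_left key hcard.le
  calc ∑ i ∈ s, x i ^ p = (s.card:ℝ) * ((s.card:ℝ)⁻¹ * ∑ i ∈ s, x i ^ p) := by
        field_simp
    _ ≤ (s.card:ℝ) * ((s.card:ℝ)⁻¹ ^ p * (∑ i ∈ s, x i) ^ p) := this
    _ = (s.card:ℝ) ^ (1-p) * (∑ i ∈ s, x i) ^ p := by
        rw [← mul_assoc]
        congr 1
        rw [Real.rpow_sub hcard, Real.rpow_one, Real.inv_rpow hcard.le]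
        field_simp

section Stage1
variable {e B n : ℕ}

/-- least coordinate with x c < B -/
noncomputable def tQ (B : ℕ) (x : Fin (e+1) → ℕ) : Fin (e+1) :=
  if h : ((univ : Finset (Fin (e+1))).filter (fun c => x c < B)).Nonempty
  then ((univ : Finset (Fin (e+1))).filter (fun c => x c < B)).min' h else 0

lemma tQ_spec {x : Fin (e+1) → ℕ} (hne : ∃ c, x c < B) :
    x (tQ B x) < B ∧ ∀ c' < tQ B x, B ≤ x c' := by
  obtain ⟨c, hc⟩ := hne
  have hn : ((univ : Finset (Fin (e+1))).filter (fun c => x c < B)).Nonempty :=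
    ⟨c, by simp [hc]⟩
  rw [tQ, dif_pos hn]
  constructor
  · have := Finset.min'_mem _ hn
    simpa using this
  · intro c' hc'
    by_contra h
    push_neg at h
    have hmem : c' ∈ (univ : Finset (Fin (e+1))).filter (fun c => x c < B) := by
      simp only [mem_filter, mem_univ, true_and]; exact h
    have hle := Finset.min'_le _ c' hmem
    exact absurd (lt_of_le_of_lt hle hc') (lt_irrefl _)

lemma tQ_eq {x : Fin (e+1) → ℕ} {c : Fin (e+1)} (h1 : x c < B)
    (h2 : ∀ c' < c, B ≤ x c') : tQ B x = c := by
  obtain ⟨ha, hb⟩ := tQ_spec (B := B) (x := x) ⟨c, h1⟩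
  rcases lt_trichotomy (tQ B x) c with h | h | h
  · exact absurd ha (by simpa using h2 _ h)
  · exact h
  · exact absurd h1 (by simpa using hb _ h)

def shf (c : Fin (e+1)) (x : Fin (e+1) → ℕ) : Fin (e+1) → ℕ :=
  fun c' => if c' < c then x c' - B else x c'

def unf (B : ℕ) (c : Fin (e+1)) (x : Fin (e+1) → ℕ) : Fin (e+1) → ℕ :=
  fun c' => if c' < c then x c' + B else x c'

lemma unf_shf {c : Fin (e+1)} {x : Fin (e+1) → ℕ} (h : ∀ c' < c, B ≤ x c') :
    unf B c (shf (B := B) c x) = x := by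
  funext c'
  simp only [unf, shf]
  by_cases hc : c' < c <;> simp [hc]
  have := h c' hc; omega

/-- slices of W along the last coordinate -/
noncomputable def slic (W : Finset (Fin (e+1) → ℕ)) (j : ℕ) : Finset (Fin e → ℕ) :=
  (W.filter (fun x => x (Fin.last e) = j)).image (fun x => x ∘ Fin.castSucc)

lemma snoc_mem_slic_iff {W : Finset (Fin (e+1) → ℕ)} {z : Fin e → ℕ} {j : ℕ} :
    z ∈ slic W j ↔ Fin.snoc z j ∈ W := by
  unfold slic
  simp only [mem_image, mem_filter]
  constructor
  · rintro ⟨x, ⟨hxW, hxj⟩, rfl⟩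
    have : Fin.snoc (x ∘ Fin.castSucc) (j : ℕ) = x := by
      funext i
      refine Fin.lastCases ?_ ?_ i
      · rw [Fin.snoc_last, ← hxj]
      · intro i'; rw [Fin.snoc_castSucc]; rfl
    rwa [this]
  · intro h
    refine ⟨Fin.snoc z j, ⟨h, by rw [Fin.snoc_last]⟩, ?_⟩
    funext i'; rw [Function.comp_apply, Fin.snoc_castSucc]

lemma slic_lower {W : Finset (Fin (e+1) → ℕ)} (hW : IsLowerSet (↑W : Set (Fin (e+1) → ℕ)))
    (j : ℕ) : IsLowerSet (↑(slic W j) : Set (Fin e → ℕ)) := by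
  intro z z' hz hzW
  simp only [Finset.mem_coe, snoc_mem_slic_iff] at hzW ⊢
  refine hW ?_ hzW
  intro i
  refine Fin.lastCases ?_ ?_ i
  · simp [Fin.snoc_last]
  · intro i'; simp only [Fin.snoc_castSucc]; exact hz i'

lemma slic_nested {W : Finset (Fin (e+1) → ℕ)} (hW : IsLowerSet (↑W : Set (Fin (e+1) → ℕ)))
    {j j' : ℕ} (h : j ≤ j') : slic W j' ⊆ slic W j := by
  intro z hz
  rw [snoc_mem_slic_iff] at hz ⊢
  refine hW ?_ hz
  intro i
  refine Fin.lastCases ?_ ?_ i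
  · simp only [Fin.snoc_last]; exact_mod_cast h
  · intro i'; simp [Fin.snoc_castSucc]

lemma card_slic {W : Finset (Fin (e+1) → ℕ)} (j : ℕ) :
    (slic W j).card = (W.filter (fun x => x (Fin.last e) = j)).card := by
  unfold slic
  apply Finset.card_image_of_injOn
  intro x hx y hy hxy
  simp only [coe_filter, Set.mem_setOf_eq] at hx hy
  funext i
  refine Fin.lastCases ?_ ?_ i
  · rw [hx.2, hy.2]
  · intro i'; exact congrFun hxy i'

lemma slic_decomp {W : Finset (Fin (e+1) → ℕ)} (hWB : ∀ x ∈ W, x (Fin.last e) < B) :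
    W = (univ : Finset (Fin B)).biUnion
      (fun j => (slic W (j : ℕ)).image (fun z => Fin.snoc z ((j : ℕ) : ℕ))) := by
  ext x
  simp only [mem_biUnion, mem_univ, true_and, mem_image]
  constructor
  · intro hx
    refine ⟨⟨x (Fin.last e), hWB x hx⟩, x ∘ Fin.castSucc, ?_, ?_⟩
    · rw [snoc_mem_slic_iff]
      have : Fin.snoc (x ∘ Fin.castSucc) (x (Fin.last e)) = x := by
        funext i
        refine Fin.lastCases ?_ ?_ i
        · rw [Fin.snoc_last]
        · intro i'; rw [Fin.snoc_castSucc]; rfl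
      rwa [this]
    · funext i
      refine Fin.lastCases ?_ ?_ i
      · rw [Fin.snoc_last]
      · intro i'; rw [Fin.snoc_castSucc]; rfl
  · rintro ⟨j, z, hz, rfl⟩
    rw [snoc_mem_slic_iff] at hz
    exact hz

lemma sum_card_slic {W : Finset (Fin (e+1) → ℕ)} (hWB : ∀ x ∈ W, x (Fin.last e) < B) :
    ∑ j : Fin B, (slic W (j : ℕ)).card = W.card := by
  rw [Fin.sum_univ_eq_sum_range (fun j => (slic W j).card) B]
  rw [Finset.sum_congr rfl (fun j _ => card_slic j)]
  exact (Finset.card_eq_sum_card_fiberwise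
    (f := fun x => x (Fin.last e)) (s := W) (t := range B)
    (fun x hx => mem_range.mpr (hWB x hx))).symm

/-- pieces of Q -/
noncomputable def Tc (B : ℕ) (Q : Finset (Fin (e+1) → ℕ)) (c : Fin (e+1)) :
    Finset (Fin (e+1) → ℕ) := Q.filter (fun x => tQ B x = c)

noncomputable def Uc (B : ℕ) (Q : Finset (Fin (e+1) → ℕ)) (c : Fin (e+1)) :
    Finset (Fin (e+1) → ℕ) := (Tc B Q c).image (shf (B := B) c)

noncomputable def Wc (B : ℕ) (Q : Finset (Fin (e+1) → ℕ)) (c : Fin (e+1)) :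
    Finset (Fin (e+1) → ℕ) :=
  (Uc B Q c).image (fun x => x ∘ ⇑(Equiv.swap c (Fin.last e)))

lemma mem_Tc {Q : Finset (Fin (e+1) → ℕ)} {c : Fin (e+1)} {x : Fin (e+1) → ℕ}
    (hx : x ∈ Tc B Q c) (hne : ∃ c0, x c0 < B) :
    x ∈ Q ∧ x c < B ∧ ∀ c' < c, B ≤ x c' := by
  simp only [Tc, mem_filter] at hx
  obtain ⟨hxQ, hxc⟩ := hx
  obtain ⟨h1, h2⟩ := tQ_spec (B := B) hne
  rw [hxc] at h1 h2
  exact ⟨hxQ, h1, h2⟩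

lemma cover {Q : Finset (Fin (e+1) → ℕ)} (hQl : IsLowerSet (↑Q : Set (Fin (e+1) → ℕ)))
    (hQB : Q.card < (B+1)^(e+1)) {x : Fin (e+1) → ℕ} (hx : x ∈ Q) : ∃ c, x c < B := by
  by_contra h
  push_neg at h
  have hsub := box_subset hQl hx
  have hcard := Finset.card_le_card hsub
  rw [Fintype.card_piFinset] at hcard
  have : (B+1)^(e+1) ≤ ∏ i : Fin (e+1), (range (x i + 1)).card := by
    calc (B+1)^(e+1) = ∏ _i : Fin (e+1), (B+1) := by
          rw [Finset.prod_const, Finset.card_univ, Fintype.card_fin]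
      _ ≤ _ := Finset.prod_le_prod (fun i _ => by omega)
          (fun i _ => by simp only [Finset.card_range]; have := h i; omega)
  omega

lemma Tc_partition {Q : Finset (Fin (e+1) → ℕ)} :
    ∑ c : Fin (e+1), (Tc B Q c).card = Q.card := by
  exact (Finset.card_eq_sum_card_fiberwise
    (f := fun x => tQ B x) (s := Q) (t := univ) (fun x hx => mem_univ _)).symm

variable {Q : Finset (Fin (e+1) → ℕ)} (hcov : ∀ x ∈ Q, ∃ c0, x c0 < B)

include hcov

lemma shf_injOn {c : Fin (e+1)} :
    Set.InjOn (shf (B := B) c) ↑(Tc B Q c) := by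
  intro x hx y hy hxy
  rw [Finset.mem_coe] at hx hy
  have hxm := mem_Tc hx (hcov x (mem_of_mem_filter x hx))
  have hym := mem_Tc hy (hcov y (mem_of_mem_filter y hy))
  rw [← unf_shf (B := B) hxm.2.2, ← unf_shf (B := B) hym.2.2, hxy]

lemma card_Wc {c : Fin (e+1)} :
    (Wc B Q c).card = (Tc B Q c).card := by
  rw [Wc, Finset.card_image_of_injective _ ?_, Uc,
    Finset.card_image_of_injOn (shf_injOn hcov)]
  intro a b hab
  funext i
  have := congrFun hab (Equiv.swap c (Fin.last e) i)
  simpa [Equiv.swap_apply_self] using this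

lemma Uc_lower (hQl : IsLowerSet (↑Q : Set (Fin (e+1) → ℕ)))
    {c : Fin (e+1)} : IsLowerSet (↑(Uc B Q c) : Set (Fin (e+1) → ℕ)) := by
  intro a b hba haU
  simp only [Finset.mem_coe, Uc, mem_image] at haU ⊢
  obtain ⟨x, hxT, rfl⟩ := haU
  obtain ⟨hxQ, hxc, hxlt⟩ := mem_Tc hxT (hcov x (mem_of_mem_filter x hxT))
  have hyx : unf B c b ≤ x := by
    intro c'
    by_cases hc : c' < c
    · have h1 := hba c'
      simp only [shf, if_pos hc] at h1
      simp only [unf, if_pos hc]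
      have := hxlt c' hc
      omega
    · have h1 := hba c'
      simp only [shf, if_neg hc] at h1
      simp only [unf, if_neg hc]
      exact h1
  have hyQ : unf B c b ∈ Q := hQl hyx hxQ
  refine ⟨unf B c b, ?_, ?_⟩
  · simp only [Tc, mem_filter]
    refine ⟨hyQ, tQ_eq ?_ ?_⟩
    · have h1 := hba c
      simp only [shf, if_neg (lt_irrefl c)] at h1
      simp only [unf, if_neg (lt_irrefl c)]
      omega
    · intro c' hc'
      simp only [unf, if_pos hc']
      omega
  · funext c'
    simp only [shf, unf]
    by_cases hc : c' < c <;> simp [hc]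

omit hcov

lemma comp_perm_lower {W : Finset (Fin (e+1) → ℕ)}
    (hW : IsLowerSet (↑W : Set (Fin (e+1) → ℕ))) (σ : Equiv.Perm (Fin (e+1))) :
    IsLowerSet (↑(W.image (fun x => x ∘ ⇑σ)) : Set (Fin (e+1) → ℕ)) := by
  intro a b hba haW
  simp only [Finset.mem_coe, mem_image] at haW ⊢
  obtain ⟨x, hxW, rfl⟩ := haW
  refine ⟨b ∘ ⇑σ⁻¹, hW ?_ hxW, ?_⟩
  · intro i
    have := hba (σ⁻¹ i)
    simpa using this
  · funext i; simp

include hcov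

lemma Wc_lower (hQl : IsLowerSet (↑Q : Set (Fin (e+1) → ℕ)))
    {c : Fin (e+1)} : IsLowerSet (↑(Wc B Q c) : Set (Fin (e+1) → ℕ)) :=
  comp_perm_lower (Uc_lower hcov hQl) _

lemma Wc_last {c : Fin (e+1)} {x : Fin (e+1) → ℕ}
    (hx : x ∈ Wc B Q c) : x (Fin.last e) < B := by
  simp only [Wc, Uc, mem_image] at hx
  obtain ⟨y, ⟨z, hzT, rfl⟩, rfl⟩ := hx
  have hz := (mem_Tc hzT (hcov z (mem_of_mem_filter z hzT))).2.1
  simp only [Function.comp_apply, Equiv.swap_apply_right, shf,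
    if_neg (lt_irrefl c)]
  exact hz

omit hcov

noncomputable def fQ (B : ℕ) (Q : Finset (Fin (e+1) → ℕ)) : Fin (e+1) → Fin B → ℕ :=
  fun c j => (slic (Wc B Q c) (j:ℕ)).card

noncomputable def psiQ (B : ℕ) (Q : Finset (Fin (e+1) → ℕ)) :
    Fin (e+1) × Fin B → Finset (Fin e → ℕ) :=
  fun p => slic (Wc B Q p.1) (p.2:ℕ)

noncomputable def BASEf (e B n : ℕ) : Finset (Fin (e+1) → Fin B → ℕ) :=
  (Fintype.piFinset (fun _ : Fin (e+1) =>
    Fintype.piFinset (fun _ : Fin B => range (n+1)))).filter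
    (fun f => (∀ c : Fin (e+1), ∀ j j' : Fin B, j ≤ j' → f c j' ≤ f c j) ∧
      ∑ c : Fin (e+1), ∑ j : Fin B, f c j = n)

noncomputable def TT (e B n : ℕ) :
    Finset ((_f : Fin (e+1) → Fin B → ℕ) × (Fin (e+1) × Fin B → Finset (Fin e → ℕ))) :=
  (BASEf e B n).sigma (fun f => Fintype.piFinset (fun p => LC e (f p.1 p.2)))

noncomputable def DEC (B : ℕ)
    (t : (_f : Fin (e+1) → Fin B → ℕ) × (Fin (e+1) × Fin B → Finset (Fin e → ℕ))) :
    Finset (Fin (e+1) → ℕ) :=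
  univ.biUnion (fun c =>
    Finset.image (unf B c)
      (Finset.image (fun x => x ∘ ⇑(Equiv.swap c (Fin.last e)))
        (Finset.biUnion (univ : Finset (Fin B))
          (fun j => Finset.image
            (fun z => (Fin.snoc z ((j:ℕ)) : Fin (e+1) → ℕ)) (t.2 (c, j))))))

include hcov

lemma fQ_mem_BASEf (hQl : IsLowerSet (↑Q : Set (Fin (e+1) → ℕ))) (hQn : Q.card = n) :
    fQ B Q ∈ BASEf e B n := by
  have hfle : ∀ (c : Fin (e+1)) (j : Fin B), fQ B Q c j ≤ n := by
    intro c j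
    have h1 : (slic (Wc B Q c) (j:ℕ)).card ≤ (Wc B Q c).card := by
      rw [card_slic]; exact Finset.card_le_card (Finset.filter_subset _ _)
    have h2 : (Tc B Q c).card ≤ Q.card := Finset.card_le_card (Finset.filter_subset _ _)
    have h3 := card_Wc (Q := Q) (c := c) hcov
    unfold fQ; omega
  simp only [BASEf, mem_filter, Fintype.mem_piFinset, mem_range]
  refine ⟨?_, ?_, ?_⟩
  · intro c
    first
    | · simp only [Fintype.mem_piFinset, mem_range]
        exact fun j => Nat.lt_succ_of_le (hfle c j)
    | exact fun j => Nat.lt_succ_of_le (hfle c j)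
  · intro c j j' hjj
    exact Finset.card_le_card (slic_nested (Wc_lower hcov hQl) (by exact_mod_cast hjj))
  · calc ∑ c : Fin (e+1), ∑ j : Fin B, fQ B Q c j
        = ∑ c : Fin (e+1), (Wc B Q c).card := by
          refine Finset.sum_congr rfl (fun c _ => ?_)
          exact sum_card_slic (fun x hx => Wc_last hcov hx)
      _ = ∑ c : Fin (e+1), (Tc B Q c).card := by
          refine Finset.sum_congr rfl (fun c _ => card_Wc hcov)
      _ = Q.card := Tc_partition
      _ = n := hQn

lemma ENC_mem_TT (hQl : IsLowerSet (↑Q : Set (Fin (e+1) → ℕ))) (hQn : Q.card = n) :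
    (⟨fQ B Q, psiQ B Q⟩ :
      (_f : Fin (e+1) → Fin B → ℕ) × (Fin (e+1) × Fin B → Finset (Fin e → ℕ))) ∈ TT e B n := by
  rw [TT, mem_sigma]
  refine ⟨fQ_mem_BASEf hcov hQl hQn, ?_⟩
  rw [Fintype.mem_piFinset]
  intro p
  rw [mem_LC]
  exact ⟨slic_lower (Wc_lower hcov hQl) _, rfl⟩

lemma DEC_ENC (hQl : IsLowerSet (↑Q : Set (Fin (e+1) → ℕ))) :
    DEC B (⟨fQ B Q, psiQ B Q⟩ :
      (_f : Fin (e+1) → Fin B → ℕ) × (Fin (e+1) × Fin B → Finset (Fin e → ℕ))) = Q := by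
  unfold DEC
  dsimp only
  have h1 : ∀ c : Fin (e+1),
      ((univ : Finset (Fin B)).biUnion
        (fun j => (psiQ B Q (c, j)).image
          (fun z => (Fin.snoc z ((j:ℕ)) : Fin (e+1) → ℕ)))) = Wc B Q c := by
    intro c
    exact (slic_decomp (fun x hx => Wc_last hcov hx)).symm
  have h2 : ∀ c : Fin (e+1),
      (Wc B Q c).image (fun x => x ∘ ⇑(Equiv.swap c (Fin.last e))) = Uc B Q c := by
    intro c
    rw [Wc, Finset.image_image]
    have : ((fun x : Fin (e+1) → ℕ => x ∘ ⇑(Equiv.swap c (Fin.last e))) ∘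
        (fun x => x ∘ ⇑(Equiv.swap c (Fin.last e)))) = id := by
      funext x; funext i
      simp [Equiv.swap_apply_self]
    rw [this, Finset.image_id]
  have h3 : ∀ c : Fin (e+1), (Uc B Q c).image (unf B c) = Tc B Q c := by
    intro c
    rw [Uc, Finset.image_image]
    rw [Finset.image_congr (g := id) ?_, Finset.image_id]
    intro x hx
    rw [Finset.mem_coe] at hx
    exact unf_shf (mem_Tc hx (hcov x (mem_of_mem_filter x hx))).2.2
  simp only [h1, h2, h3]
  ext x
  simp only [mem_biUnion, mem_univ, true_and]
  constructor
  · rintro ⟨c, hc⟩; exact mem_of_mem_filter x hc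
  · intro hx
    exact ⟨tQ B x, by simp only [Tc, mem_filter]; exact ⟨hx, trivial⟩⟩

omit hcov

lemma stage1_card (hBn : n < (B+1)^(e+1)) :
    (LC (e+1) n).card ≤ (TT e B n).card := by
  apply Finset.card_le_card_of_surjOn (DEC B)
  intro Q hQ
  rw [Finset.mem_coe, mem_LC] at hQ
  obtain ⟨hQl, hQn⟩ := hQ
  have hcov : ∀ x ∈ Q, ∃ c0, x c0 < B := by
    intro x hx
    exact cover hQl (by rw [hQn]; exact hBn) hx
  refine ⟨⟨fQ B Q, psiQ B Q⟩, ?_, ?_⟩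
  · rw [Finset.mem_coe]
    exact ENC_mem_TT hcov hQl hQn
  · exact DEC_ENC hcov hQl

end Stage1

section Stage2
variable {e B n : ℕ}

/-- number of pairs with value ≥ v -/
noncomputable def cntge (f : Fin (e+1) → Fin B → ℕ) (v : ℕ) : ℕ :=
  ((univ : Finset (Fin (e+1) × Fin B)).filter (fun p => v ≤ f p.1 p.2)).card

/-- merged sorted profile (y-th largest value), via double conjugation -/
noncomputable def lof (f : Fin (e+1) → Fin B → ℕ) (n y : ℕ) : ℕ :=
  ((range n).filter (fun u => y < cntge f (u+1))).card

noncomputable def rr (f : Fin (e+1) → Fin B → ℕ) (c : Fin (e+1)) (v : ℕ) : ℕ :=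
  ((univ : Finset (Fin B)).filter (fun j => f c j = v)).card

noncomputable def cum (f : Fin (e+1) → Fin B → ℕ) (v k : ℕ) : ℕ :=
  ((univ : Finset (Fin (e+1) × Fin B)).filter
    (fun p => (p.1 : ℕ) < k ∧ f p.1 p.2 = v)).card

noncomputable def tof (f : Fin (e+1) → Fin B → ℕ) (n y : ℕ) : ℕ :=
  y - cntge f (lof f n y + 1)

/-- canonical coordinate assignment for row y of the merged diagram -/
noncomputable def aof (f : Fin (e+1) → Fin B → ℕ) (n y : ℕ) : Fin (e+1) :=
  ⟨min (((range (e+1)).filter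
      (fun k => cum f (lof f n y) (k+1) ≤ tof f n y)).card) e, by omega⟩

variable {f : Fin (e+1) → Fin B → ℕ}

lemma cntge_anti {v v' : ℕ} (h : v ≤ v') : cntge f v' ≤ cntge f v := by
  apply Finset.card_le_card
  intro p hp
  simp only [mem_filter] at hp ⊢
  exact ⟨hp.1, le_trans h hp.2⟩

lemma cntge_zero : cntge f 0 = (e+1) * B := by
  unfold cntge
  rw [Finset.filter_true_of_mem (fun p _ => Nat.zero_le _)]
  simp [Finset.card_univ]

lemma cntge_le : ∀ v, cntge f v ≤ (e+1) * B := fun v => by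
  calc cntge f v ≤ cntge f 0 := cntge_anti (Nat.zero_le v)
    _ = (e+1)*B := cntge_zero

variable (hsum : ∑ c : Fin (e+1), ∑ j : Fin B, f c j = n)
include hsum

lemma f_le_n : ∀ c j, f c j ≤ n := by
  intro c j
  rw [← hsum]
  calc f c j ≤ ∑ j' : Fin B, f c j' :=
        Finset.single_le_sum (fun _ _ => Nat.zero_le _) (mem_univ j)
    _ ≤ _ := Finset.single_le_sum (f := fun c => ∑ j' : Fin B, f c j')
        (fun _ _ => Nat.zero_le _) (mem_univ c)

lemma cntge_eq_zero {v : ℕ} (hv : n < v) : cntge f v = 0 := by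
  unfold cntge
  rw [Finset.card_eq_zero]
  ext p
  simp only [mem_filter, Finset.notMem_empty, iff_false, not_and]
  intro _
  have := f_le_n hsum p.1 p.2
  omega

omit hsum

lemma lof_anti {y y' : ℕ} (h : y ≤ y') : lof f n y' ≤ lof f n y := by
  apply Finset.card_le_card
  intro u hu
  simp only [mem_filter] at hu ⊢
  exact ⟨hu.1, lt_of_le_of_lt h hu.2⟩

lemma lof_le_n : ∀ y, lof f n y ≤ n := fun y => by
  calc lof f n y ≤ (range n).card := Finset.card_filter_le _ _
    _ = n := Finset.card_range n

include hsum

/-- main threshold identity -/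
lemma lof_thresh {v y : ℕ} (hy : y < (e+1)*B) :
    v ≤ lof f n y ↔ y < cntge f v := by
  rcases Nat.eq_zero_or_pos v with rfl | hv
  · simp [cntge_zero, hy]
  obtain ⟨w, rfl⟩ : ∃ w, v = w + 1 := ⟨v - 1, by omega⟩
  set S := (range n).filter (fun u => y < cntge f (u+1)) with hS
  have hdc : ∀ a b : ℕ, a ≤ b → b ∈ S → a ∈ S := by
    intro a b hab hb
    simp only [hS, mem_filter, mem_range] at hb ⊢
    exact ⟨by omega, lt_of_lt_of_le hb.2 (cntge_anti (by omega))⟩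
  have hrange : S = range (lof f n y) := rangelem S hdc
  have hmem : w ∈ S ↔ (w < n ∧ y < cntge f (w+1)) := by
    simp [hS, mem_filter, mem_range]
  constructor
  · intro h
    have : w ∈ range (lof f n y) := mem_range.mpr (by omega)
    rw [← hrange] at this
    exact (hmem.mp this).2
  · intro h
    have hwn : w < n := by
      by_contra hwn
      push_neg at hwn
      have := cntge_eq_zero hsum (v := w+1) (by omega)
      omega
    have : w ∈ S := hmem.mpr ⟨hwn, h⟩
    rw [hrange] at this
    have := mem_range.mp this
    omega

/-- total size of merged profile -/
lemma lof_sum : ∑ y ∈ range ((e+1)*B), lof f n y = n := by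
  have hfr : ∀ K M : ℕ, K ≤ M → (range M).filter (fun y => y < K) = range K := by
    intro K M h; ext x; simp only [mem_filter, mem_range]; omega
  unfold lof
  rw [Finset.sum_congr rfl (fun y _ => Finset.card_filter _ _)]
  rw [Finset.sum_comm]
  have h1 : ∀ u ∈ range n,
      (∑ y ∈ range ((e+1)*B), if y < cntge f (u+1) then 1 else 0) = cntge f (u+1) := by
    intro u _
    rw [← Finset.card_filter]
    rw [hfr _ _ (cntge_le (u+1))]
    exact Finset.card_range _
  rw [Finset.sum_congr rfl h1]
  unfold cntge
  rw [Finset.sum_congr rfl (fun u _ => Finset.card_filter _ _)]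
  rw [Finset.sum_comm]
  have h2 : ∀ p : Fin (e+1) × Fin B, p ∈ univ →
      (∑ u ∈ range n, if u + 1 ≤ f p.1 p.2 then 1 else 0) = f p.1 p.2 := by
    intro p _
    rw [← Finset.card_filter]
    have : (range n).filter (fun u => u + 1 ≤ f p.1 p.2)
        = (range n).filter (fun u => u < f p.1 p.2) := by
      apply Finset.filter_congr; intro u _; simp [Nat.succ_le_iff]
    rw [this, hfr _ _ (f_le_n hsum p.1 p.2)]
    exact Finset.card_range _
  rw [Finset.sum_congr rfl h2]
  rw [← hsum, Fintype.sum_prod_type]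

omit hsum

lemma cum_zero {v : ℕ} : cum f v 0 = 0 := by
  unfold cum
  rw [Finset.card_eq_zero]
  ext p; simp

lemma cum_mono {v : ℕ} {k k' : ℕ} (h : k ≤ k') : cum f v k ≤ cum f v k' := by
  apply Finset.card_le_card
  intro p hp
  simp only [mem_filter] at hp ⊢
  exact ⟨hp.1, lt_of_lt_of_le hp.2.1 h, hp.2.2⟩

lemma rr_eq {v : ℕ} {c : Fin (e+1)} :
    ((univ : Finset (Fin (e+1) × Fin B)).filter
      (fun p => p.1 = c ∧ f p.1 p.2 = v)).card = rr f c v := by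
  unfold rr
  rw [← Finset.card_image_of_injective
    (f := fun j : Fin B => ((c, j) : Fin (e+1) × Fin B)) _ ?_]
  · congr 1
    ext p
    simp only [mem_filter, mem_univ, true_and, mem_image]
    constructor
    · rintro ⟨rfl, hv⟩
      exact ⟨p.2, hv, rfl⟩
    · rintro ⟨j, hj, rfl⟩
      exact ⟨rfl, hj⟩
  · intro a b hab
    simpa using congrArg Prod.snd hab

lemma cum_succ {v : ℕ} {c : Fin (e+1)} :
    cum f v ((c:ℕ)+1) = cum f v (c:ℕ) + rr f c v := by
  unfold cum
  rw [← rr_eq (f := f) (v := v) (c := c), ← Finset.card_union_of_disjoint ?_]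
  · congr 1
    ext p
    have hlt : (p.1 : ℕ) < e + 1 := p.1.isLt
    simp only [mem_filter, mem_univ, true_and, mem_union]
    constructor
    · rintro ⟨hk, hv⟩
      rcases Nat.lt_or_ge (p.1:ℕ) (c:ℕ) with h | h
      · exact Or.inl ⟨h, hv⟩
      · exact Or.inr ⟨Fin.ext (by omega), hv⟩
    · rintro (⟨h1, h2⟩ | ⟨h1, h2⟩)
      · exact ⟨by omega, h2⟩
      · refine ⟨?_, h2⟩
        rw [h1]
        omega
  · rw [Finset.disjoint_left]
    rintro p hp hp2
    simp only [mem_filter] at hp hp2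
    have := hp2.2.1
    rw [this] at hp
    simp at hp

lemma cntge_split {v : ℕ} : cntge f v = cntge f (v+1) + cum f v (e+1) := by
  unfold cntge cum
  rw [← Finset.card_union_of_disjoint]
  · congr 1
    ext p
    have : (p.1 : ℕ) < e + 1 := p.1.isLt
    simp only [mem_filter, mem_univ, true_and, mem_union]
    omega
  · rw [Finset.disjoint_left]
    intro p hp hp2
    simp only [mem_filter] at hp hp2
    omega

include hsum

lemma tof_lt {y : ℕ} (hy : y < (e+1)*B) :
    cntge f (lof f n y + 1) ≤ y ∧ tof f n y < cum f (lof f n y) (e+1) := by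
  set v := lof f n y with hv
  have h1 : y < cntge f v := (lof_thresh hsum hy).mp (le_refl v)
  have h2 : ¬ (y < cntge f (v+1)) := by
    intro h
    have := (lof_thresh hsum hy).mpr h
    omega
  push_neg at h2
  have := cntge_split (f := f) (v := v)
  unfold tof
  constructor
  · exact h2
  · rw [← hv]; omega

/-- characterization of aof -/
lemma aof_eq_iff {y : ℕ} (hy : y < (e+1)*B) {c : Fin (e+1)} :
    aof f n y = c ↔ (cum f (lof f n y) (c:ℕ) ≤ tof f n y ∧
      tof f n y < cum f (lof f n y) ((c:ℕ)+1)) := by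
  set v := lof f n y with hv
  set t := tof f n y with ht
  set S := (range (e+1)).filter (fun k => cum f v (k+1) ≤ t) with hS
  have hdc : ∀ a b : ℕ, a ≤ b → b ∈ S → a ∈ S := by
    intro a b hab hb
    simp only [hS, mem_filter, mem_range] at hb ⊢
    exact ⟨by omega, le_trans (cum_mono (by omega)) hb.2⟩
  have hrange : S = range S.card := rangelem S hdc
  have hiff : ∀ k : ℕ, k ∈ S ↔ k < S.card := by
    intro k
    conv_lhs => rw [hrange]
    exact mem_range
  have htlt := (tof_lt hsum hy).2
  have heS : e ∉ S := by
    simp only [hS, mem_filter, mem_range]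
    rintro ⟨-, h⟩
    rw [← hv, ← ht] at htlt
    omega
  have hcard : S.card ≤ e := by
    by_contra h
    push_neg at h
    exact heS ((hiff e).mpr h)
  have haof : (aof f n y : ℕ) = S.card := by
    have hrfl : (aof f n y : ℕ) = min (((range (e+1)).filter
        (fun k => cum f (lof f n y) (k+1) ≤ tof f n y)).card) e := rfl
    rw [hrfl, ← hv, ← ht, ← hS]
    omega
  have hmemS : ∀ k : ℕ, k ∈ S ↔ (k < e+1 ∧ cum f v (k+1) ≤ t) := by
    intro k; simp [hS, mem_filter, mem_range]
  constructor
  · rintro rfl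
    constructor
    · rcases Nat.eq_zero_or_pos S.card with h0 | h0
      · rw [haof, h0, cum_zero]; omega
      · have : (S.card - 1) ∈ S := (hiff _).mpr (by omega)
        rw [hmemS] at this
        rw [haof]
        have : cum f v (S.card - 1 + 1) ≤ t := this.2
        calc cum f v S.card = cum f v (S.card - 1 + 1) := by congr 1; omega
          _ ≤ t := this
    · have hns : S.card ∉ S := by
        intro h
        exact absurd ((hiff _).mp h) (lt_irrefl _)
      rw [hmemS] at hns
      push_neg at hns
      rw [haof]
      have := hns (by omega)
      omega
  · rintro ⟨hc1, hc2⟩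
    apply Fin.ext
    rw [haof]
    have hge : (c:ℕ) ≤ S.card := by
      by_contra h
      push_neg at h
      have hcS : S.card ∈ S := by
        rw [hmemS]
        have : (c : ℕ) < e + 1 := c.isLt
        refine ⟨by omega, le_trans (cum_mono (by omega)) hc1⟩
      exact absurd ((hiff _).mp hcS) (by omega)
    have hle : S.card ≤ (c:ℕ) := by
      by_contra h
      push_neg at h
      have hcS : (c:ℕ) ∈ S := (hiff _).mpr h
      rw [hmemS] at hcS
      have : cum f v ((c:ℕ)+1) ≤ t := hcS.2
      omega
    omega

/-- row interval for value v coordinate c -/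
lemma count_rows {v : ℕ} {c : Fin (e+1)} :
    ((range ((e+1)*B)).filter (fun y => aof f n y = c ∧ lof f n y = v)).card
      = rr f c v := by
  have hIco : (range ((e+1)*B)).filter (fun y => aof f n y = c ∧ lof f n y = v)
      = Ico (cntge f (v+1) + cum f v (c:ℕ)) (cntge f (v+1) + cum f v ((c:ℕ)+1)) := by
    ext y
    simp only [mem_filter, mem_range, Finset.mem_Ico]
    constructor
    · rintro ⟨hy, hac, hlv⟩
      have h1 := (tof_lt hsum hy).1
      have h2 := (aof_eq_iff hsum hy).mp hac
      rw [hlv] at h1 h2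
      unfold tof at h2
      rw [hlv] at h2
      omega
    · rintro ⟨hy1, hy2⟩
      have hcume : cum f v ((c:ℕ)+1) ≤ cum f v (e+1) := cum_mono (by omega)
      have hsplit := cntge_split (f := f) (v := v)
      have hylt : y < cntge f v := by omega
      have hyDB : y < (e+1)*B := lt_of_lt_of_le hylt (cntge_le v)
      have hlofy : lof f n y = v := by
        have hge : v ≤ lof f n y := (lof_thresh hsum hyDB).mpr hylt
        have hlt : ¬ (v + 1 ≤ lof f n y) := by
          intro h
          have := (lof_thresh hsum hyDB).mp h
          omega
        omega
      refine ⟨hyDB, ?_, hlofy⟩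
      rw [aof_eq_iff hsum hyDB, hlofy]
      unfold tof
      rw [hlofy]
      constructor
      · omega
      · omega
  rw [hIco, Nat.card_Ico]
  have := cum_succ (f := f) (v := v) (c := c)
  omega

omit hsum

noncomputable def Acnt (f : Fin (e+1) → Fin B → ℕ) (n : ℕ) (c : Fin (e+1)) (w : ℕ) : ℕ :=
  ((range ((e+1)*B)).filter (fun y => aof f n y = c ∧ w ≤ lof f n y)).card

noncomputable def Bcnt (f : Fin (e+1) → Fin B → ℕ) (c : Fin (e+1)) (w : ℕ) : ℕ :=
  ((univ : Finset (Fin B)).filter (fun j => w ≤ f c j)).card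

lemma Acnt_anti {c : Fin (e+1)} {w w' : ℕ} (h : w ≤ w') :
    Acnt f n c w' ≤ Acnt f n c w := by
  apply Finset.card_le_card
  intro y hy
  simp only [mem_filter] at hy ⊢
  exact ⟨hy.1, hy.2.1, le_trans h hy.2.2⟩

include hsum

lemma Acnt_eq_Bcnt {c : Fin (e+1)} {w : ℕ} : Acnt f n c w = Bcnt f c w := by
  have hA : Acnt f n c w = ∑ v ∈ Icc w n,
      ((range ((e+1)*B)).filter (fun y => aof f n y = c ∧ lof f n y = v)).card := by
    unfold Acnt
    rw [Finset.card_eq_sum_card_fiberwise (f := fun y => lof f n y)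
      (t := Icc w n) ?_]
    · refine Finset.sum_congr rfl (fun v hv => ?_)
      rw [Finset.filter_filter]
      congr 1
      apply Finset.filter_congr
      intro y _
      simp only [Finset.mem_Icc] at hv
      constructor
      · rintro ⟨⟨h1, h2⟩, h3⟩; exact ⟨h1, h3⟩
      · rintro ⟨h1, h2⟩; exact ⟨⟨h1, by omega⟩, h2⟩
    · intro y hy
      simp only [Finset.mem_coe, mem_filter] at hy
      simp only [Finset.mem_coe, Finset.mem_Icc]
      exact ⟨hy.2.2, lof_le_n y⟩
  have hB : Bcnt f c w = ∑ v ∈ Icc w n, rr f c v := by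
    unfold Bcnt rr
    rw [Finset.card_eq_sum_card_fiberwise (f := fun j => f c j) (t := Icc w n) ?_]
    · refine Finset.sum_congr rfl (fun v hv => ?_)
      rw [Finset.filter_filter]
      congr 1
      apply Finset.filter_congr
      intro j _
      simp only [Finset.mem_Icc] at hv
      constructor
      · rintro ⟨h1, h2⟩; exact h2
      · rintro h1; exact ⟨by omega, h1⟩
    · intro j hj
      simp only [Finset.mem_coe, mem_filter] at hj
      simp only [Finset.mem_coe, Finset.mem_Icc]
      exact ⟨hj.2, f_le_n hsum c j⟩
  rw [hA, hB]
  exact Finset.sum_congr rfl (fun v _ => count_rows hsum)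

omit hsum

/-- threshold lemma for antitone functions on Fin B -/
lemma fin_thresh {g : Fin B → ℕ} (hg : ∀ j j' : Fin B, j ≤ j' → g j' ≤ g j)
    (v : ℕ) (j : Fin B) :
    v ≤ g j ↔ (j:ℕ) < ((univ : Finset (Fin B)).filter (fun j' => v ≤ g j')).card := by
  set Sf := (univ : Finset (Fin B)).filter (fun j' => v ≤ g j') with hSf
  set Simg := Sf.image Fin.val with hSimg
  have hcard : Simg.card = Sf.card := Finset.card_image_of_injective _ Fin.val_injective
  have hdc : ∀ a b : ℕ, a ≤ b → b ∈ Simg → a ∈ Simg := by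
    intro a b hab hb
    simp only [hSimg, mem_image, hSf, mem_filter, mem_univ, true_and] at hb ⊢
    obtain ⟨j', hj', hval⟩ := hb
    have ha : a < B := by have := j'.isLt; omega
    refine ⟨⟨a, ha⟩, ?_, rfl⟩
    refine le_trans hj' (hg _ j' ?_)
    rw [← Fin.val_fin_le]
    simp only
    omega
  have hrange := rangelem Simg hdc
  have : (j:ℕ) ∈ Simg ↔ j ∈ Sf := by
    simp only [hSimg, mem_image]
    constructor
    · rintro ⟨j', hj', hval⟩
      rwa [Fin.val_injective hval] at hj'
    · intro h; exact ⟨j, h, rfl⟩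
  rw [← hcard]
  constructor
  · intro h
    have hj : j ∈ Sf := by simp [hSf, h]
    rw [← this] at hj
    rw [hrange] at hj
    exact mem_range.mp hj
  · intro h
    have hj : (j:ℕ) ∈ Simg := by rw [hrange]; exact mem_range.mpr h
    rw [this] at hj
    simp only [hSf, mem_filter, mem_univ, true_and] at hj
    exact hj

/-- generic decoder of profiles from merged data -/
noncomputable def fdec (B n : ℕ) (lt : ℕ → ℕ) (at_ : ℕ → Fin (e+1)) :
    Fin (e+1) → Fin B → ℕ :=
  fun c j => ((range n).filter (fun u => (j:ℕ) <
    ((range ((e+1)*B)).filter (fun y => at_ y = c ∧ u < lt y)).card)).card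

include hsum

lemma fdec_eq (hanti : ∀ c : Fin (e+1), ∀ j j' : Fin B, j ≤ j' → f c j' ≤ f c j) :
    fdec B n (lof f n) (aof f n) = f := by
  funext c j
  have hcnt : ∀ u : ℕ, ((range ((e+1)*B)).filter
      (fun y => aof f n y = c ∧ u < lof f n y)).card = Acnt f n c (u+1) := by
    intro u
    unfold Acnt
    congr 1
  unfold fdec
  rw [Finset.filter_congr (fun u _ => by rw [hcnt u])]
  set S' := (range n).filter (fun u => (j:ℕ) < Acnt f n c (u+1)) with hS'
  have hdc : ∀ a b : ℕ, a ≤ b → b ∈ S' → a ∈ S' := by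
    intro a b hab hb
    simp only [hS', mem_filter, mem_range] at hb ⊢
    exact ⟨by omega, lt_of_lt_of_le hb.2 (Acnt_anti (by omega))⟩
  have hiff : ∀ k : ℕ, k ∈ S' ↔ k < S'.card := by
    intro k
    conv_lhs => rw [rangelem S' hdc]
    exact mem_range
  have hthm : ∀ v : ℕ, 1 ≤ v → (v ≤ S'.card ↔ v ≤ f c j) := by
    intro v hv
    have hv1 : v - 1 ∈ S' ↔ (v - 1 < n ∧ (j:ℕ) < Acnt f n c v) := by
      simp only [hS', mem_filter, mem_range]
      constructor
      · rintro ⟨h1, h2⟩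
        refine ⟨h1, ?_⟩
        have : v - 1 + 1 = v := by omega
        rwa [this] at h2
      · rintro ⟨h1, h2⟩
        refine ⟨h1, ?_⟩
        have : v - 1 + 1 = v := by omega
        rwa [this]
    have hAB : Acnt f n c v = Bcnt f c v := Acnt_eq_Bcnt hsum
    have hft := fin_thresh (hanti c) v j
    constructor
    · intro h
      have : v - 1 ∈ S' := (hiff _).mpr (by omega)
      rw [hv1] at this
      rw [hAB] at this
      exact hft.mpr this.2
    · intro h
      have hjB : (j:ℕ) < Bcnt f c v := hft.mp h
      have hvn : v ≤ n := le_trans h (f_le_n hsum c j)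
      have : v - 1 ∈ S' := hv1.mpr ⟨by omega, by rw [hAB]; exact hjB⟩
      rw [hiff] at this
      omega
  rcases Nat.eq_zero_or_pos S'.card with h0 | h0
  · rw [h0]
    rcases Nat.eq_zero_or_pos (f c j) with h1 | h1
    · omega
    · have := (hthm (f c j) h1).mpr (le_refl _)
      omega
  · rcases Nat.eq_zero_or_pos (f c j) with h1 | h1
    · have := (hthm S'.card h0).mp (le_refl _)
      omega
    · have ha := (hthm S'.card h0).mp (le_refl _)
      have hb := (hthm (f c j) h1).mpr (le_refl _)
      omega

omit hsum

def pairF (p : ℕ × ℕ) : Fin 2 → ℕ := fun i => if (i:ℕ) = 0 then p.1 else p.2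

lemma pairF_zero {p : ℕ × ℕ} : pairF p 0 = p.1 := rfl
lemma pairF_one {p : ℕ × ℕ} : pairF p 1 = p.2 := rfl

lemma pairF_inj : Function.Injective pairF := by
  intro p q h
  have h0 := congrFun h 0
  have h1 := congrFun h 1
  rw [pairF_zero, pairF_zero] at h0
  rw [pairF_one, pairF_one] at h1
  exact Prod.ext h0 h1

lemma pairF_eta {g : Fin 2 → ℕ} : pairF (g 0, g 1) = g := by
  funext i
  fin_cases i
  · rfl
  · rfl

noncomputable def Ydiag (B n : ℕ) (f : Fin (e+1) → Fin B → ℕ) : Finset (Fin 2 → ℕ) :=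
  ((range n ×ˢ range ((e+1)*B)).filter (fun p => p.1 < lof f n p.2)).image pairF

lemma mem_Ydiag {g : Fin 2 → ℕ} :
    g ∈ Ydiag (e := e) B n f ↔ g 1 < (e+1)*B ∧ g 0 < lof f n (g 1) := by
  unfold Ydiag
  rw [Finset.mem_image]
  constructor
  · rintro ⟨p, hp, rfl⟩
    simp only [mem_filter, Finset.mem_product, mem_range] at hp
    rw [pairF_zero, pairF_one]
    exact ⟨hp.1.2, hp.2⟩
  · rintro ⟨h1, h2⟩
    refine ⟨(g 0, g 1), ?_, pairF_eta⟩
    simp only [mem_filter, Finset.mem_product, mem_range]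
    exact ⟨⟨lt_of_lt_of_le h2 (lof_le_n _), h1⟩, h2⟩

lemma Ydiag_lower : IsLowerSet (↑(Ydiag (e := e) B n f) : Set (Fin 2 → ℕ)) := by
  intro a b hba ha
  rw [Finset.mem_coe, mem_Ydiag] at ha ⊢
  refine ⟨lt_of_le_of_lt (hba 1) ha.1, ?_⟩
  calc b 0 ≤ a 0 := hba 0
    _ < lof f n (a 1) := ha.2
    _ ≤ lof f n (b 1) := lof_anti (hba 1)

lemma Ydiag_row {y : ℕ} (hy : y < (e+1)*B) :
    ((Ydiag (e := e) B n f).filter (fun g => g 1 = y)).card = lof f n y := by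
  have himg : ((Ydiag (e := e) B n f).filter (fun g => g 1 = y)).image (fun g => g 0)
      = range (lof f n y) := by
    ext u
    simp only [Finset.mem_image, mem_filter, mem_range]
    constructor
    · rintro ⟨g, ⟨hg, hg1⟩, rfl⟩
      rw [mem_Ydiag] at hg
      rw [← hg1]
      exact hg.2
    · intro hu
      refine ⟨pairF (u, y), ⟨?_, pairF_one⟩, pairF_zero⟩
      rw [mem_Ydiag, pairF_zero, pairF_one]
      exact ⟨hy, hu⟩
  have hinj : Set.InjOn (fun g : Fin 2 → ℕ => g 0)
      ↑((Ydiag (e := e) B n f).filter (fun g => g 1 = y)) := by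
    intro g hg g' hg' h0
    simp only [coe_filter, Set.mem_setOf_eq] at hg hg'
    simp only at h0
    rw [← pairF_eta (g := g), ← pairF_eta (g := g')]
    rw [hg.2, hg'.2, h0]
  rw [← Finset.card_image_of_injOn hinj, himg, Finset.card_range]

include hsum

lemma Ydiag_card : (Ydiag (e := e) B n f).card = n := by
  rw [Finset.card_eq_sum_card_fiberwise (f := fun g => g 1) (t := range ((e+1)*B)) ?_]
  · rw [Finset.sum_congr rfl (fun y hy => Ydiag_row (mem_range.mp hy))]
    exact lof_sum hsum
  · intro g hg
    rw [Finset.mem_coe, mem_Ydiag] at hg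
    exact mem_range.mpr hg.1

lemma Ydiag_mem_LC : Ydiag (e := e) B n f ∈ LC 2 n :=
  mem_LC.mpr ⟨Ydiag_lower, Ydiag_card hsum⟩

omit hsum

/-- decoder for stage 2 -/
noncomputable def Phi (e B n : ℕ)
    (Yb : Finset (Fin 2 → ℕ) × (Fin ((e+1)*B) → Fin (e+1))) :
    Fin (e+1) → Fin B → ℕ :=
  fdec B n (fun y => (Yb.1.filter (fun g => g 1 = y)).card)
    (fun y => if h : y < (e+1)*B then Yb.2 ⟨y, h⟩ else 0)

lemma mem_BASEf {f : Fin (e+1) → Fin B → ℕ} (hf : f ∈ BASEf e B n) :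
    (∀ c : Fin (e+1), ∀ j j' : Fin B, j ≤ j' → f c j' ≤ f c j) ∧
      ∑ c : Fin (e+1), ∑ j : Fin B, f c j = n := by
  simp only [BASEf, mem_filter] at hf
  exact hf.2

lemma stage2_card :
    (BASEf e B n).card ≤ (LC 2 n).card * (e+1)^((e+1)*B) := by
  have hcard : ((LC 2 n) ×ˢ (Fintype.piFinset
      (fun _ : Fin ((e+1)*B) => (univ : Finset (Fin (e+1)))))).card
      = (LC 2 n).card * (e+1)^((e+1)*B) := by
    rw [Finset.card_product, Fintype.card_piFinset]
    congr 1
    rw [Finset.prod_const, Finset.card_univ, Fintype.card_fin, Finset.card_univ,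
      Fintype.card_fin]
  rw [← hcard]
  apply Finset.card_le_card_of_surjOn (Phi e B n)
  intro f hf
  rw [Finset.mem_coe] at hf
  obtain ⟨hanti, hsum⟩ := mem_BASEf hf
  refine ⟨(Ydiag (e := e) B n f, fun y => aof f n (y : ℕ)), ?_, ?_⟩
  · rw [Finset.mem_coe, Finset.mem_product]
    refine ⟨Ydiag_mem_LC hsum, ?_⟩
    rw [Fintype.mem_piFinset]
    intro y
    exact mem_univ _
  · show Phi e B n _ = f
    have h1 : Phi e B n (Ydiag (e := e) B n f, fun y => aof f n (y : ℕ))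
        = fdec B n (lof f n) (aof f n) := by
      unfold Phi fdec
      funext c j
      congr 1
      apply Finset.filter_congr
      intro u _
      have h2 : ((range ((e+1)*B)).filter (fun y =>
          (if h : y < (e+1)*B then aof f n (y:ℕ) else 0) = c ∧
            u < ((Ydiag (e := e) B n f).filter (fun g => g 1 = y)).card))
          = ((range ((e+1)*B)).filter (fun y => aof f n y = c ∧ u < lof f n y)) := by
        apply Finset.filter_congr
        intro y hy
        rw [dif_pos (mem_range.mp hy), Ydiag_row (mem_range.mp hy)]
      rw [h2]
    rw [h1]
    exact fdec_eq hsum hanti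

end Stage2

section Assembly

lemma rpow_sum {ι : Type*} (s : Finset ι) (γ : ℝ) (hγ : 0 < γ) (g : ι → ℝ) :
    ∏ i ∈ s, γ ^ (g i) = γ ^ (∑ i ∈ s, g i) := by
  induction s using Finset.cons_induction with
  | empty => simp
  | cons a s ha ih =>
    rw [Finset.prod_cons, Finset.sum_cons, ih, ← Real.rpow_add hγ]

variable {e B n : ℕ}

lemma TT_card :
    ((TT e B n).card : ℝ) = ∑ f ∈ BASEf e B n,
      ∏ p : Fin (e+1) × Fin B, (((LC e (f p.1 p.2)).card : ℕ) : ℝ) := by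
  unfold TT
  rw [Finset.card_sigma]
  push_cast
  refine Finset.sum_congr rfl (fun f _ => ?_)
  rw [Fintype.card_piFinset]
  push_cast
  rfl

lemma prod_le_gamma {γ : ℝ} (hγ : 1 ≤ γ) (he : 2 ≤ e) (hB : 1 ≤ B)
    (hLC : ∀ k : ℕ, 1 ≤ k → ((LC e k).card : ℝ) ≤ γ ^ ((k:ℝ) ^ (1 - 1/(e:ℝ))))
    {f : Fin (e+1) → Fin B → ℕ} (hf : f ∈ BASEf e B n) :
    ∏ p : Fin (e+1) × Fin B, (((LC e (f p.1 p.2)).card : ℕ) : ℝ) ≤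
      γ ^ ((((e:ℝ)+1) * (B:ℝ)) ^ (1/(e:ℝ)) * (n:ℝ) ^ (1 - 1/(e:ℝ))) := by
  obtain ⟨hanti, hsum⟩ := mem_BASEf hf
  have hγ0 : (0:ℝ) < γ := by linarith
  set α : ℝ := 1 - 1/(e:ℝ) with hα
  have heR : (2:ℝ) ≤ (e:ℝ) := by exact_mod_cast he
  have hα0 : 0 < α := by
    rw [hα]
    have : 1/(e:ℝ) ≤ 1/2 := by
      apply div_le_div_of_nonneg_left <;> linarith
    linarith
  have hα1 : α ≤ 1 := by
    rw [hα]
    have : 0 < 1/(e:ℝ) := by positivity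
    linarith
  have hfactor : ∀ k : ℕ, ((LC e k).card : ℝ) ≤ γ ^ ((k:ℝ) ^ α) := by
    intro k
    rcases Nat.eq_zero_or_pos k with rfl | hk
    · rw [LC_zero]
      simp only [Finset.card_singleton, Nat.cast_one, Nat.cast_zero]
      rw [Real.zero_rpow (ne_of_gt hα0), Real.rpow_zero]
    · exact hLC k hk
  calc ∏ p : Fin (e+1) × Fin B, (((LC e (f p.1 p.2)).card : ℕ) : ℝ)
      ≤ ∏ p : Fin (e+1) × Fin B, γ ^ (((f p.1 p.2 : ℕ):ℝ) ^ α) :=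
        Finset.prod_le_prod (fun p _ => by positivity) (fun p _ => hfactor _)
    _ = γ ^ (∑ p : Fin (e+1) × Fin B, ((f p.1 p.2 : ℕ):ℝ) ^ α) :=
        rpow_sum _ _ hγ0 _
    _ ≤ γ ^ ((((e:ℝ)+1) * (B:ℝ)) ^ (1/(e:ℝ)) * (n:ℝ) ^ α) := by
        apply Real.rpow_le_rpow_of_exponent_le hγ
        have hsplit : ∑ p : Fin (e+1) × Fin B, ((f p.1 p.2 : ℕ):ℝ) ^ α
            = ∑ c : Fin (e+1), ∑ j : Fin B, ((f c j : ℕ):ℝ) ^ α := by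
          rw [Fintype.sum_prod_type]
        rw [hsplit]
        have hBne : (univ : Finset (Fin B)).Nonempty :=
          Finset.univ_nonempty_iff.mpr (Fin.pos_iff_nonempty.mp (by omega))
        have hEne : (univ : Finset (Fin (e+1))).Nonempty :=
          Finset.univ_nonempty_iff.mpr (Fin.pos_iff_nonempty.mp (by omega))
        have hinner : ∀ c : Fin (e+1),
            ∑ j : Fin B, ((f c j : ℕ):ℝ) ^ α ≤
              (B:ℝ) ^ (1 - α) * (∑ j : Fin B, ((f c j : ℕ):ℝ)) ^ α := by
          intro c
          have := jensen (univ : Finset (Fin B)) (fun j => ((f c j : ℕ):ℝ))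
            (fun j _ => by positivity) hα0 hα1 hBne
          simpa only [Finset.card_univ, Fintype.card_fin] using this
        have houter : ∑ c : Fin (e+1), (∑ j : Fin B, ((f c j : ℕ):ℝ)) ^ α ≤
            ((e:ℝ)+1) ^ (1 - α) * (n:ℝ) ^ α := by
          have := jensen (univ : Finset (Fin (e+1)))
            (fun c => ∑ j : Fin B, ((f c j : ℕ):ℝ))
            (fun c _ => Finset.sum_nonneg (fun j _ => by positivity)) hα0 hα1 hEne
          simp only [Finset.card_univ, Fintype.card_fin] at this
          have hns : ∑ c : Fin (e+1), ∑ j : Fin B, ((f c j : ℕ):ℝ) = (n:ℝ) := by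
            rw [← hsum]; push_cast; rfl
          rw [hns] at this
          convert this using 2
          push_cast; ring
        calc ∑ c : Fin (e+1), ∑ j : Fin B, ((f c j : ℕ):ℝ) ^ α
            ≤ ∑ c : Fin (e+1), (B:ℝ) ^ (1 - α) * (∑ j : Fin B, ((f c j : ℕ):ℝ)) ^ α :=
              Finset.sum_le_sum (fun c _ => hinner c)
          _ = (B:ℝ) ^ (1 - α) * ∑ c : Fin (e+1), (∑ j : Fin B, ((f c j : ℕ):ℝ)) ^ α := by
              rw [Finset.mul_sum]
          _ ≤ (B:ℝ) ^ (1 - α) * (((e:ℝ)+1) ^ (1 - α) * (n:ℝ) ^ α) := by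
              apply mul_le_mul_of_nonneg_left houter (by positivity)
          _ = (((e:ℝ)+1) * (B:ℝ)) ^ (1/(e:ℝ)) * (n:ℝ) ^ α := by
              have h1a : 1 - α = 1/(e:ℝ) := by rw [hα]; ring
              rw [h1a, ← mul_assoc, ← Real.mul_rpow (by positivity) (by positivity),
                mul_comm (B:ℝ)]
    _ ≤ _ := le_refl _

end Assembly

theorem stmt_14 (d : ℕ) (hd : 3 ≤ d) (γ : ℝ) (hγ : 1 ≤ γ)
    (h2 : ∀ m : ℕ, 1 ≤ m →
      (lowerCount 2 m : ℝ) ≤ Real.exp (Real.pi * Real.sqrt (2 * (m : ℝ) / 3)))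
    (hprev : ∀ k : ℕ, 1 ≤ k →
      (lowerCount (d - 1) k : ℝ) ≤ γ ^ ((k : ℝ) ^ (1 - 1 / ((d : ℝ) - 1)))) :
    ∀ n : ℕ, 1 ≤ n →
      (lowerCount d n : ℝ) ≤
        Real.exp (Real.pi * Real.sqrt (2 * (n : ℝ) / 3)) *
          (d : ℝ) ^ ((d : ℝ) * (n : ℝ) ^ ((1 : ℝ) / (d : ℝ))) *
          γ ^ ((d : ℝ) ^ ((1 : ℝ) / ((d : ℝ) - 1)) * (n : ℝ) ^ (1 - 1 / (d : ℝ))) := by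
  obtain ⟨e, rfl⟩ : ∃ e, d = e + 1 := ⟨d - 1, by omega⟩
  have he : 2 ≤ e := by omega
  intro n hn
  have heR : (2:ℝ) ≤ (e:ℝ) := by exact_mod_cast he
  have hdR : ((e+1 : ℕ) : ℝ) = (e:ℝ) + 1 := by push_cast; ring
  have hdm1 : ((e+1 : ℕ) : ℝ) - 1 = (e:ℝ) := by rw [hdR]; ring
  have hLC : ∀ k : ℕ, 1 ≤ k →
      ((LC e k).card : ℝ) ≤ γ ^ ((k:ℝ) ^ (1 - 1/(e:ℝ))) := by
    intro k hk
    have := hprev k hk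
    rw [show e + 1 - 1 = e from rfl, lowerCount_eq, hdm1] at this
    exact this
  have hγ0 : (0:ℝ) < γ := by linarith
  have hn1 : (1:ℝ) ≤ (n:ℝ) := by exact_mod_cast hn
  have hn0 : (0:ℝ) < (n:ℝ) := by linarith
  set rB : ℝ := (n:ℝ) ^ ((1:ℝ)/((e:ℝ)+1)) with hrB
  have hrBpos : 0 < rB := Real.rpow_pos_of_pos hn0 _
  have hrB1 : 1 ≤ rB := by
    rw [hrB]
    calc (1:ℝ) = (1:ℝ) ^ ((1:ℝ)/((e:ℝ)+1)) := (Real.one_rpow _).symm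
      _ ≤ _ := Real.rpow_le_rpow (by norm_num) hn1 (by positivity)
  set B : ℕ := ⌊rB⌋₊ with hB
  have hB1 : 1 ≤ B := Nat.le_floor (by exact_mod_cast hrB1)
  have hBle : (B:ℝ) ≤ rB := Nat.floor_le hrBpos.le
  have hrBpow : rB ^ (e+1 : ℕ) = (n:ℝ) := by
    rw [hrB, ← Real.rpow_natCast (_ ^ _) (e+1), ← Real.rpow_mul hn0.le]
    rw [show (1:ℝ)/((e:ℝ)+1) * ((e+1:ℕ):ℝ) = 1 by rw [hdR]; field_simp]
    exact Real.rpow_one _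
  have hBn : n < (B+1)^(e+1) := by
    have hreal : (n:ℝ) < ((B:ℝ)+1)^(e+1:ℕ) := by
      rw [← hrBpow]
      apply pow_lt_pow_left₀ (Nat.lt_floor_add_one rB) hrBpos.le
      omega
    have : (n:ℝ) < (((B+1)^(e+1) : ℕ) : ℝ) := by push_cast; exact hreal
    exact_mod_cast this
  -- main chain
  have step1 : (lowerCount (e+1) n : ℝ) ≤ ((TT e B n).card : ℝ) := by
    rw [lowerCount_eq]
    exact_mod_cast stage1_card hBn
  have step2 : ((TT e B n).card : ℝ) ≤ ((BASEf e B n).card : ℝ) *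
      γ ^ ((((e:ℝ)+1) * (B:ℝ)) ^ (1/(e:ℝ)) * (n:ℝ) ^ (1 - 1/(e:ℝ))) := by
    rw [TT_card]
    calc ∑ f ∈ BASEf e B n, ∏ p : Fin (e+1) × Fin B, (((LC e (f p.1 p.2)).card : ℕ) : ℝ)
        ≤ ∑ _f ∈ BASEf e B n,
            γ ^ ((((e:ℝ)+1) * (B:ℝ)) ^ (1/(e:ℝ)) * (n:ℝ) ^ (1 - 1/(e:ℝ))) :=
          Finset.sum_le_sum (fun f hf => prod_le_gamma hγ he hB1 hLC hf)
      _ = _ := by rw [Finset.sum_const, nsmul_eq_mul]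
  have step3 : ((BASEf e B n).card : ℝ) ≤
      ((LC 2 n).card : ℝ) * ((e+1 : ℕ) : ℝ) ^ ((e+1)*B : ℕ) := by
    exact_mod_cast stage2_card (e := e) (B := B) (n := n)
  have hLC2 : ((LC 2 n).card : ℝ) ≤ Real.exp (Real.pi * Real.sqrt (2 * (n : ℝ) / 3)) := by
    rw [← lowerCount_eq]
    exact h2 n hn
  have hApow : ((e+1 : ℕ) : ℝ) ^ ((e+1)*B : ℕ) ≤
      ((e+1 : ℕ) : ℝ) ^ (((e+1:ℕ):ℝ) * (n:ℝ) ^ ((1:ℝ)/((e+1:ℕ):ℝ))) := by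
    rw [← Real.rpow_natCast ((e+1 : ℕ) : ℝ) ((e+1)*B)]
    apply Real.rpow_le_rpow_of_exponent_le (by exact_mod_cast Nat.le_add_left 1 e)
    rw [hdR]
    push_cast
    calc ((e:ℝ)+1) * (B:ℝ) ≤ ((e:ℝ)+1) * rB := by
          apply mul_le_mul_of_nonneg_left hBle (by positivity)
      _ = ((e:ℝ)+1) * (n:ℝ) ^ ((1:ℝ)/((e:ℝ)+1)) := by rw [hrB]
  have hgexp : (((e:ℝ)+1) * (B:ℝ)) ^ (1/(e:ℝ)) * (n:ℝ) ^ (1 - 1/(e:ℝ)) ≤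
      ((e+1:ℕ):ℝ) ^ ((1:ℝ)/(((e+1:ℕ):ℝ) - 1)) * (n:ℝ) ^ (1 - 1/((e+1:ℕ):ℝ)) := by
    rw [hdm1, hdR]
    have h1 : (((e:ℝ)+1) * (B:ℝ)) ^ (1/(e:ℝ))
        = ((e:ℝ)+1) ^ (1/(e:ℝ)) * (B:ℝ) ^ (1/(e:ℝ)) := by
      apply Real.mul_rpow (by positivity) (by positivity)
    have h2' : (B:ℝ) ^ (1/(e:ℝ)) ≤ (n:ℝ) ^ ((1:ℝ)/((e:ℝ)+1) * (1/(e:ℝ))) := by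
      rw [Real.rpow_mul hn0.le]
      exact Real.rpow_le_rpow (by positivity) hBle (by positivity)
    have h3 : (n:ℝ) ^ ((1:ℝ)/((e:ℝ)+1) * (1/(e:ℝ))) * (n:ℝ) ^ (1 - 1/(e:ℝ))
        = (n:ℝ) ^ (1 - 1/((e:ℝ)+1)) := by
      rw [← Real.rpow_add hn0]
      congr 1
      have he0 : (e:ℝ) ≠ 0 := by linarith
      have he1 : (e:ℝ) + 1 ≠ 0 := by linarith
      field_simp
      ring
    calc (((e:ℝ)+1) * (B:ℝ)) ^ (1/(e:ℝ)) * (n:ℝ) ^ (1 - 1/(e:ℝ))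
        = ((e:ℝ)+1) ^ (1/(e:ℝ)) * ((B:ℝ) ^ (1/(e:ℝ)) * (n:ℝ) ^ (1 - 1/(e:ℝ))) := by
          rw [h1]; ring
      _ ≤ ((e:ℝ)+1) ^ (1/(e:ℝ)) *
          ((n:ℝ) ^ ((1:ℝ)/((e:ℝ)+1) * (1/(e:ℝ))) * (n:ℝ) ^ (1 - 1/(e:ℝ))) := by
          apply mul_le_mul_of_nonneg_left ?_ (by positivity)
          apply mul_le_mul_of_nonneg_right h2' (by positivity)
      _ = ((e:ℝ)+1) ^ (1/(e:ℝ)) * (n:ℝ) ^ (1 - 1/((e:ℝ)+1)) := by rw [h3]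
  have hgB : γ ^ ((((e:ℝ)+1) * (B:ℝ)) ^ (1/(e:ℝ)) * (n:ℝ) ^ (1 - 1/(e:ℝ))) ≤
      γ ^ (((e+1:ℕ):ℝ) ^ ((1:ℝ)/(((e+1:ℕ):ℝ) - 1)) * (n:ℝ) ^ (1 - 1/((e+1:ℕ):ℝ))) :=
    Real.rpow_le_rpow_of_exponent_le hγ hgexp
  calc (lowerCount (e+1) n : ℝ)
      ≤ ((BASEf e B n).card : ℝ) *
        γ ^ ((((e:ℝ)+1) * (B:ℝ)) ^ (1/(e:ℝ)) * (n:ℝ) ^ (1 - 1/(e:ℝ))) :=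
        le_trans step1 step2
    _ ≤ (((LC 2 n).card : ℝ) * ((e+1 : ℕ) : ℝ) ^ ((e+1)*B : ℕ)) *
        γ ^ ((((e:ℝ)+1) * (B:ℝ)) ^ (1/(e:ℝ)) * (n:ℝ) ^ (1 - 1/(e:ℝ))) := by
        apply mul_le_mul_of_nonneg_right step3 (by positivity)
    _ ≤ (Real.exp (Real.pi * Real.sqrt (2 * (n : ℝ) / 3)) *
          ((e+1 : ℕ) : ℝ) ^ (((e+1:ℕ):ℝ) * (n:ℝ) ^ ((1:ℝ)/((e+1:ℕ):ℝ)))) *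
        γ ^ (((e+1:ℕ):ℝ) ^ ((1:ℝ)/(((e+1:ℕ):ℝ) - 1)) * (n:ℝ) ^ (1 - 1/((e+1:ℕ):ℝ))) := by
        apply mul_le_mul
        · apply mul_le_mul hLC2 hApow (by positivity)
            (Real.exp_pos _).le
        · exact hgB
        · positivity
        · positivity
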